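/- Let d, s, λ₃, r₂, r₃, a, b, h, ε > 0 with a > 1, 0 < h < 1, u_p = (1+b)/(1+ab), w_p = (a-1)/(1+ab), β* = 1 - h u_p - b w_p, d·λ₃² - s·λ₃ + r₂β* = 0, and r₃(ε + 1) ≤ r₂β*. Let α satisfy α(z) ≥ -ε·e^{λ₃ z} for z < 0. Define ψ(z) = w_p(1 - e^{λ₃ z}) and suppose φ̲₁(z) = u_p(1 - e^{λ₃ z}), φ̲₂(z) ≥ 0. Then for all z < 0: d·ψ''(z) - s·ψ'(z) + r₃·ψ(z)·[-1 + α(z) + a·φ̲₁(z) + a·φ̲₂(z) - ψ(z)] ≥ 0. -/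
import Mathlib

lemma deriv_exp_aux (c k : ℝ) :
    deriv (fun z : ℝ => c * Real.exp (k * z)) = fun z => c * k * Real.exp (k * z) := by
  funext z
  have h0 : HasDerivAt (fun z : ℝ => k * z) k z := by
    simpa using (hasDerivAt_id z).const_mul k
  have h1 : HasDerivAt (fun z : ℝ => Real.exp (k * z)) (Real.exp (k * z) * k) z :=
    (Real.hasDerivAt_exp (k * z)).comp z h0
  have h2 : HasDerivAt (fun z : ℝ => c * Real.exp (k * z)) (c * (Real.exp (k * z) * k)) z :=
    h1.const_mul c
  rw [h2.deriv]; ring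

lemma deriv_one_sub_exp_aux (c k : ℝ) :
    deriv (fun z : ℝ => c * (1 - Real.exp (k * z))) = fun z => -(c * k) * Real.exp (k * z) := by
  funext z
  have h0 : HasDerivAt (fun z : ℝ => k * z) k z := by
    simpa using (hasDerivAt_id z).const_mul k
  have h1 : HasDerivAt (fun z : ℝ => Real.exp (k * z)) (Real.exp (k * z) * k) z :=
    (Real.hasDerivAt_exp (k * z)).comp z h0
  have h2 : HasDerivAt (fun z : ℝ => c * (1 - Real.exp (k * z)))
      (c * -(Real.exp (k * z) * k)) z := ((h1.const_sub 1).const_mul c)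
  rw [h2.deriv]; ring

set_option maxHeartbeats 1000000 in
theorem lower_solution_L3_Estar (d s ld₃ r₂ r₃ a b h ε : ℝ)
    (hd : 0 < d) (hs : 0 < s) (hld : 0 < ld₃) (hr₂ : 0 < r₂) (hr₃ : 0 < r₃)
    (ha : 1 < a) (hb : 0 < b) (hh : 0 < h) (hh1 : h < 1) (hε : 0 < ε)
    (u_p w_p : ℝ) (hu : u_p = (1 + b) / (1 + a * b)) (hw : w_p = (a - 1) / (1 + a * b))
    (hA2 : d * ld₃ ^ 2 - s * ld₃ + r₂ * (1 - h * u_p - b * w_p) = 0)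
    (hcond : r₃ * (ε + 1) ≤ r₂ * (1 - h * u_p - b * w_p))
    (α : ℝ → ℝ) (hα : ∀ z < 0, α z ≥ -ε * Real.exp (ld₃ * z))
    (φ₂ : ℝ → ℝ) (hφ₂ : ∀ z, 0 ≤ φ₂ z) :
    ∀ z < 0,
      d * deriv (deriv (fun z => w_p * (1 - Real.exp (ld₃ * z)))) z
        - s * deriv (fun z => w_p * (1 - Real.exp (ld₃ * z))) z
        + r₃ * (w_p * (1 - Real.exp (ld₃ * z))) *
          (-1 + α z + a * (u_p * (1 - Real.exp (ld₃ * z))) + a * φ₂ z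
            - w_p * (1 - Real.exp (ld₃ * z))) ≥ 0 := by
  intro z hz
  rw [deriv_one_sub_exp_aux w_p ld₃, deriv_exp_aux (-(w_p * ld₃)) ld₃]
  beta_reduce
  set E := Real.exp (ld₃ * z) with hE
  have hEpos : 0 < E := Real.exp_pos _
  have hE1 : E < 1 := by
    rw [hE]
    have : ld₃ * z < 0 := mul_neg_of_pos_of_neg hld hz
    simpa using Real.exp_lt_one_iff.mpr this
  have hαz := hα z hz
  clear_value E
  have hab : (0:ℝ) < 1 + a * b := by nlinarith
  have hwpos : 0 < w_p := by rw [hw]; exact div_pos (by linarith) hab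
  have hkey : a * u_p - w_p = 1 := by
    rw [hu, hw]; field_simp; ring
  have hφ := hφ₂ z
  have e1 : a * (u_p * (1 - E)) - w_p * (1 - E) = 1 - E := by
    linear_combination (1 - E) * hkey
  have hB : -1 + α z + a * (u_p * (1 - E)) + a * φ₂ z - w_p * (1 - E) ≥ -(1 + ε) * E := by
    have haφ : 0 ≤ a * φ₂ z := mul_nonneg (by linarith) hφ
    nlinarith [hαz, haφ, e1]
  have hψ0 : 0 ≤ w_p * (1 - E) := by nlinarith
  have hψle : w_p * (1 - E) ≤ w_p := by nlinarith
  have h1 : r₃ * (w_p * (1 - E)) * (-1 + α z + a * (u_p * (1 - E)) + a * φ₂ z - w_p * (1 - E))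
      ≥ r₃ * (w_p * (1 - E)) * (-(1 + ε) * E) := by
    apply mul_le_mul_of_nonneg_left hB (mul_nonneg hr₃.le hψ0)
  have h2' : w_p * (-(1 + ε) * E) ≤ (w_p * (1 - E)) * (-(1 + ε) * E) :=
    mul_le_mul_of_nonpos_right hψle (by nlinarith)
  have h2 : r₃ * (w_p * (1 - E)) * (-(1 + ε) * E) ≥ r₃ * w_p * (-(1 + ε) * E) := by
    nlinarith [mul_le_mul_of_nonneg_left h2' hr₃.le]
  have h4 : d * (-(w_p * ld₃) * ld₃ * E) - s * (-(w_p * ld₃) * E)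
      = r₂ * (1 - h * u_p - b * w_p) * (w_p * E) := by
    linear_combination (-(w_p * E)) * hA2
  have h3 : r₃ * w_p * (-(1 + ε) * E) ≥ -(r₂ * (1 - h * u_p - b * w_p) * (w_p * E)) := by
    nlinarith [mul_le_mul_of_nonneg_right hcond (mul_pos hwpos hEpos).le]
  linarith [h1, h2, h3, h4]
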